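/- Let f : [0,1] → ℝ be continuous, right-differentiable at 0, and satisfy f(t+h) - 2f(t) + f(t-h) ≥ κh² for some κ ∈ ℝ and all t, h ≥ 0 with 0 ≤ t - h and t + h ≤ 1. Then f(1) ≥ f(0) + f'(0) + κ/2. -/

import Mathlib

theorem discrete_second_derivative_bound
    (f : ℝ → ℝ) (κ d : ℝ)
    (hf : ContinuousOn f (Set.Icc 0 1))
    (hd : HasDerivWithinAt f d (Set.Ici (0:ℝ)) 0)
    (hconv : ∀ t h : ℝ, 0 ≤ t → 0 ≤ h → 0 ≤ t - h → t + h ≤ 1 →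
      κ * h^2 ≤ f (t + h) - 2 * f t + f (t - h)) :
    f 0 + d + κ / 2 ≤ f 1 := by
  set g : ℝ → ℝ := fun t => f t - κ / 2 * t ^ 2 with hg
  -- g has right derivative d at 0
  have hq : HasDerivWithinAt (fun t : ℝ => κ / 2 * t ^ 2) (κ / 2 * (2 * 0 ^ 1))
      (Set.Ici (0:ℝ)) 0 := ((hasDerivAt_pow 2 (0:ℝ)).const_mul (κ/2)).hasDerivWithinAt
  have hgd : HasDerivWithinAt g d (Set.Ici (0:ℝ)) 0 := by
    have := hd.sub hq
    simp only [pow_one, mul_zero, sub_zero] at this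
    exact this
  -- key slope bound along dyadic points
  have hpos : ∀ n : ℕ, (0:ℝ) < (1/2) ^ n := fun n => pow_pos (by norm_num) n
  have hle1 : ∀ n : ℕ, ((1/2:ℝ)) ^ n ≤ 1 := fun n => pow_le_one₀ (by norm_num) (by norm_num)
  have key : ∀ n : ℕ, (g ((1/2) ^ n) - g 0) / (1/2) ^ n ≤ g 1 - g 0 := by
    intro n
    induction n with
    | zero => simp
    | succ n ih =>
      set p : ℝ := (1/2) ^ (n + 1) with hp
      have h2p : p + p = (1/2:ℝ) ^ n := by rw [hp]; ring
      have hc := hconv p p (le_of_lt (hpos (n+1))) (le_of_lt (hpos (n+1)))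
        (by simp) (by rw [h2p]; exact hle1 n)
      have hpp : p - p = 0 := by ring
      rw [h2p, hpp] at hc
      have e0 : g 0 = f 0 := by simp [hg]
      have ep : g p = f p - κ / 2 * p ^ 2 := rfl
      have en : g ((1/2) ^ n) = f ((1/2) ^ n) - κ / 2 * (p + p) ^ 2 := by
        rw [hg]; simp only; rw [h2p]
      have hexp : (p + p) ^ 2 = 4 * p ^ 2 := by ring
      have hmid : 0 ≤ g ((1/2) ^ n) - 2 * g p + g 0 := by
        rw [e0, ep, en, hexp]; linarith
      have hb : g p - g 0 ≤ (g ((1/2) ^ n) - g 0) / 2 := by linarith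
      have hp0 : (0:ℝ) < p := hpos (n+1)
      calc (g p - g 0) / p ≤ ((g ((1/2) ^ n) - g 0) / 2) / p := by gcongr
        _ = (g ((1/2) ^ n) - g 0) / (1/2) ^ n := by
            rw [← h2p, div_div, two_mul]
        _ ≤ g 1 - g 0 := ih
  -- pass to the limit
  have hslope : Filter.Tendsto (slope g 0) (nhdsWithin 0 (Set.Ici 0 \ {0})) (nhds d) :=
    hasDerivWithinAt_iff_tendsto_slope.mp hgd
  have hseq : Filter.Tendsto (fun n : ℕ => ((1/2:ℝ)) ^ n) Filter.atTop
      (nhdsWithin 0 (Set.Ici 0 \ {0})) := by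
    apply tendsto_nhdsWithin_of_tendsto_nhds_of_eventually_within
    · exact tendsto_pow_atTop_nhds_zero_of_lt_one (by norm_num) (by norm_num)
    · exact Filter.Eventually.of_forall fun n =>
        ⟨le_of_lt (hpos n), ne_of_gt (hpos n)⟩
  have hlim : Filter.Tendsto (fun n : ℕ => slope g 0 ((1/2) ^ n)) Filter.atTop (nhds d) :=
    hslope.comp hseq
  have hd_le : d ≤ g 1 - g 0 := by
    apply le_of_tendsto hlim
    apply Filter.Eventually.of_forall
    intro n
    have : slope g 0 ((1/2) ^ n) = (g ((1/2) ^ n) - g 0) / (1/2) ^ n := by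
      rw [slope_def_field, sub_zero]
    rw [this]; exact key n
  have hg0 : g 0 = f 0 := by simp [hg]
  have hg1 : g 1 = f 1 - κ / 2 := by simp [hg]
  rw [hg0, hg1] at hd_le
  linarith
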